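/- Let 1<α<2, let d≥2 and J be positive integers with 2^J ≥ d, and let φ:ℝ→ℝ be continuously differentiable with support contained in [0,d]. For an integer k with 0 ≤ k ≤ 2^J − d set φ_{J,k}(x) = 2^{J/2} φ(2^J x − k), and define the stiffness entry A(k₁,k₂) = ∫₀¹ ( ₀D_x^{α−1} φ_{J,k₁} )(x) · φ_{J,k₂}'(x) dx. Then A is translation invariant, i.e., depends only on k₂ − k₁: for all integers k₁,k₂,m with 0 ≤ k₁, k₂, k₁+m, k₂+m ≤ 2^J − d, one has A(k₁+m, k₂+m) = A(k₁, k₂); in particular the stiffness matrix of the uniform scaling basis is Toeplitz. -/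

import Mathlib

open Real MeasureTheory intervalIntegral

/-- Dyadic dilate/translate `φ_{J,k}(x) = 2^{J/2} φ(2^J x − k)` of a scaling
function `φ`. -/
noncomputable def phiJk (J : ℕ) (φ : ℝ → ℝ) (k : ℕ) (x : ℝ) : ℝ :=
  (2 : ℝ) ^ ((J : ℝ) / 2) * φ ((2 : ℝ) ^ J * x - (k : ℝ))

/-- Stiffness entry
`A(k₁,k₂) = ∫₀¹ ( ₀D_x^{α−1} φ_{J,k₁} )(x) · φ_{J,k₂}'(x) dx`, where
`( ₀D_x^{α−1} f )(x) = (1/Γ(2−α))·(d/dx) ∫₀ˣ (x−s)^{1−α} f(s) ds`. -/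
noncomputable def stiffEntry (α : ℝ) (J : ℕ) (φ : ℝ → ℝ) (k₁ k₂ : ℕ) : ℝ :=
  ∫ x in (0:ℝ)..1,
    (deriv (fun y => (1 / Real.Gamma (2 - α)) *
        ∫ s in (0:ℝ)..y, (y - s) ^ (1 - α) * phiJk J φ k₁ s) x)
      * deriv (phiJk J φ k₂) x

/-- Almost every real number is different from a given one. -/
lemma ae_ne_const (c : ℝ) : ∀ᵐ s : ℝ, s ≠ c := by
  have : (volume : Measure ℝ) {c} = 0 := measure_singleton c
  rw [ae_iff]
  simpa [Set.setOf_eq_eq_singleton] using this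

/-- If `g` vanishes on the negative reals, an interval integral starting at a
nonpositive point can be started at `0` instead. -/
lemma integral_shift_left {g : ℝ → ℝ} (hg : ∀ s < (0:ℝ), g s = 0)
    {a : ℝ} (ha : a ≤ 0) (b : ℝ) :
    ∫ s in a..b, g s = ∫ s in (0:ℝ)..b, g s := by
  rcases le_or_gt 0 b with hb | hb
  · rw [intervalIntegral.integral_of_le (ha.trans hb),
      intervalIntegral.integral_of_le hb]
    have h1 : ∫ s in Set.Ioc a b, g s
        = ∫ s in Set.Ioc a b, (Set.Ioc (0:ℝ) b).indicator g s := by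
      refine setIntegral_congr_ae measurableSet_Ioc ?_
      filter_upwards [ae_ne_const (0:ℝ)] with s hs0 hs
      rcases lt_or_gt_of_ne hs0 with h | h
      · rw [hg s h, Set.indicator_of_notMem]
        intro hmem
        exact absurd (Set.mem_Ioc.mp hmem).1 (not_lt.mpr h.le)
      · rw [Set.indicator_of_mem (Set.mem_Ioc.mpr ⟨h, (Set.mem_Ioc.mp hs).2⟩)]
    rw [h1, setIntegral_indicator measurableSet_Ioc, Set.Ioc_inter_Ioc,
      sup_of_le_right ha, inf_idem]
  · have h1 : ∫ s in a..b, g s = ∫ s in a..b, (0:ℝ) := by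
      refine intervalIntegral.integral_congr_ae ?_
      filter_upwards [ae_ne_const (0:ℝ)] with s hs0 hs
      refine hg s ?_
      rcases Set.mem_uIoc.mp hs with h | h
      · exact lt_of_le_of_lt h.2 hb
      · exact lt_of_le_of_ne (h.2.trans ha) hs0
    have h2 : ∫ s in (0:ℝ)..b, g s = ∫ s in (0:ℝ)..b, (0:ℝ) := by
      refine intervalIntegral.integral_congr_ae ?_
      filter_upwards [ae_ne_const (0:ℝ)] with s hs0 hs
      refine hg s ?_
      rcases Set.mem_uIoc.mp hs with h | h
      · exact absurd h.1 (not_lt.mpr (h.2.trans hb.le))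
      · exact lt_of_le_of_ne h.2 hs0
    simp [h1, h2]

/-- If `g` vanishes beyond `c ≥ 0`, an interval integral from `0` to `b ≥ c`
can be stopped at `c`. -/
lemma integral_shift_right {g : ℝ → ℝ} {c b : ℝ} (hg : ∀ s, c < s → g s = 0)
    (hc : 0 ≤ c) (hb : c ≤ b) :
    ∫ s in (0:ℝ)..b, g s = ∫ s in (0:ℝ)..c, g s := by
  rw [intervalIntegral.integral_of_le (hc.trans hb),
    intervalIntegral.integral_of_le hc]
  have h1 : ∫ s in Set.Ioc (0:ℝ) b, g s
      = ∫ s in Set.Ioc (0:ℝ) b, (Set.Ioc (0:ℝ) c).indicator g s := by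
    refine setIntegral_congr_fun measurableSet_Ioc (fun s hs => ?_)
    rcases le_or_gt s c with h | h
    · rw [Set.indicator_of_mem (Set.mem_Ioc.mpr ⟨(Set.mem_Ioc.mp hs).1, h⟩)]
    · rw [hg s h, Set.indicator_of_notMem]
      intro hmem
      exact absurd (Set.mem_Ioc.mp hmem).2 (not_le.mpr h)
  rw [h1, setIntegral_indicator measurableSet_Ioc, Set.Ioc_inter_Ioc,
    sup_idem, inf_of_le_right hb]

theorem stiffness_matrix_toeplitz
    (α : ℝ) (hα1 : 1 < α) (hα2 : α < 2)
    (d J : ℕ) (hd : 2 ≤ d) (hJ : d ≤ 2 ^ J)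
    (φ : ℝ → ℝ) (hφ : ContDiff ℝ 1 φ)
    (hsupp : Function.support φ ⊆ Set.Icc (0 : ℝ) (d : ℝ))
    (k₁ k₂ m : ℕ)
    (hk₁ : k₁ ≤ 2 ^ J - d) (hk₂ : k₂ ≤ 2 ^ J - d)
    (hk₁m : k₁ + m ≤ 2 ^ J - d) (hk₂m : k₂ + m ≤ 2 ^ J - d) :
    stiffEntry α J φ (k₁ + m) (k₂ + m) = stiffEntry α J φ k₁ k₂ := by
  -- basic positivity facts
  have h2J : (0:ℝ) < (2:ℝ) ^ J := by positivity
  set h : ℝ := (m : ℝ) / (2:ℝ) ^ J with hh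
  have hh0 : 0 ≤ h := by positivity
  have h2Jh : (2:ℝ) ^ J * h = (m : ℝ) := by
    rw [hh]
    field_simp
  -- φ vanishes on nonpositive arguments
  have hφneg : ∀ t < (0:ℝ), φ t = 0 := by
    intro t ht
    by_contra hne
    exact absurd ((hsupp hne).1) (not_le.mpr ht)
  have hφ0 : φ 0 = 0 := by
    have h1 : Filter.Tendsto φ (nhdsWithin 0 (Set.Iio 0)) (nhds (φ 0)) :=
      (hφ.continuous.tendsto 0).mono_left nhdsWithin_le_nhds
    have h2 : Filter.Tendsto φ (nhdsWithin 0 (Set.Iio 0)) (nhds 0) := by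
      refine Filter.Tendsto.congr' ?_ tendsto_const_nhds
      filter_upwards [self_mem_nhdsWithin] with t ht
      exact (hφneg t ht).symm
    exact tendsto_nhds_unique h1 h2
  have hφle : ∀ t ≤ (0:ℝ), φ t = 0 := by
    intro t ht
    rcases eq_or_lt_of_le ht with h | h
    · rw [h]; exact hφ0
    · exact hφneg t h
  have hφgt : ∀ t, (d:ℝ) < t → φ t = 0 := by
    intro t ht
    by_contra hne
    exact absurd ((hsupp hne).2) (not_le.mpr ht)
  -- phiJk vanishes on nonpositive arguments
  have hphile : ∀ (k : ℕ), ∀ s ≤ (0:ℝ), phiJk J φ k s = 0 := by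
    intro k s hs
    unfold phiJk
    rw [hφle _ ?_, mul_zero]
    have : (2:ℝ) ^ J * s ≤ 0 := mul_nonpos_of_nonneg_of_nonpos h2J.le hs
    have hk0 : (0:ℝ) ≤ (k:ℝ) := Nat.cast_nonneg k
    linarith
  -- translation identity for phiJk
  have hshiftA : ∀ (k : ℕ) (x : ℝ), phiJk J φ (k + m) x = phiJk J φ k (x - h) := by
    intro k x
    unfold phiJk
    congr 1
    push_cast
    rw [mul_sub, h2Jh]
    ring
  -- notation for the fractional integral
  set F : ℕ → ℝ → ℝ :=
    fun k y => ∫ s in (0:ℝ)..y, (y - s) ^ (1 - α) * phiJk J φ k s with hFdef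
  have hF0 : ∀ (k : ℕ) (y : ℝ), y ≤ 0 → F k y = 0 := by
    intro k y hy
    have : F k y = ∫ s in (0:ℝ)..y, (0:ℝ) := by
      refine intervalIntegral.integral_congr (fun s hs => ?_)
      have hs0 : s ≤ 0 := by
        rcases Set.mem_uIcc.mp hs with h | h
        · exact h.2.trans hy
        · exact h.2
      rw [hphile k s hs0, mul_zero]
    simp [this]
  -- shift identity for the fractional integral
  have hFshift : ∀ y : ℝ, F (k₁ + m) y = F k₁ (y - h) := by
    intro y
    have hg : ∀ s, (y - s) ^ (1 - α) * phiJk J φ (k₁ + m) s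
        = (fun s' => ((y - h) - s') ^ (1 - α) * phiJk J φ k₁ s') (s - h) := by
      intro s
      rw [hshiftA k₁ s]
      simp only []
      rw [show (y - h) - (s - h) = y - s by ring]
    calc F (k₁ + m) y
        = ∫ s in (0:ℝ)..y,
            (fun s' => ((y - h) - s') ^ (1 - α) * phiJk J φ k₁ s') (s - h) := by
          exact intervalIntegral.integral_congr (fun s _ => hg s)
      _ = ∫ s' in (0:ℝ) - h..y - h,
            ((y - h) - s') ^ (1 - α) * phiJk J φ k₁ s' :=
          intervalIntegral.integral_comp_sub_right
            (fun s' => ((y - h) - s') ^ (1 - α) * phiJk J φ k₁ s') h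
      _ = ∫ s' in (0:ℝ)..y - h,
            ((y - h) - s') ^ (1 - α) * phiJk J φ k₁ s' := by
          refine integral_shift_left (fun s hs => ?_) (by linarith) _
          rw [hphile k₁ s hs.le, mul_zero]
      _ = F k₁ (y - h) := rfl
  -- abbreviate the constant
  set c : ℝ := 1 / Real.Gamma (2 - α) with hc
  -- the integrand for the shifted indices is the translated integrand
  set H : ℝ → ℝ :=
    fun x => deriv (fun y => c * F k₁ y) x * deriv (phiJk J φ k₂) x with hHdef
  have hint : ∀ x : ℝ,
      (deriv (fun y => c * F (k₁ + m) y) x) * deriv (phiJk J φ (k₂ + m)) x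
        = H (x - h) := by
    intro x
    have d1 : deriv (fun y => c * F (k₁ + m) y) x
        = deriv (fun z => c * F k₁ z) (x - h) := by
      have hder := deriv_comp_sub_const (fun z => c * F k₁ z) h x
      rw [← hder]
      congr 1
      funext y
      rw [hFshift y]
    have d2 : deriv (phiJk J φ (k₂ + m)) x = deriv (phiJk J φ k₂) (x - h) := by
      have hder := deriv_comp_sub_const (phiJk J φ k₂) h x
      rw [← hder]
      congr 1
      funext t
      exact hshiftA k₂ t
    rw [d1, d2]
  -- H vanishes to the left of 0
  have hHneg : ∀ s < (0:ℝ), H s = 0 := by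
    intro s hs
    have : deriv (fun y => c * F k₁ y) s = 0 := by
      have heq : (fun y => c * F k₁ y) =ᶠ[nhds s] (fun _ => (0:ℝ)) := by
        filter_upwards [isOpen_Iio.mem_nhds hs] with t ht
        rw [hF0 k₁ t (le_of_lt ht), mul_zero]
      rw [heq.deriv_eq, deriv_const]
    rw [hHdef]
    simp only [this, zero_mul]
  -- H vanishes to the right of 1 - h
  have hk₂d : (k₂ : ℝ) + (m : ℝ) + (d : ℝ) ≤ (2:ℝ) ^ J := by
    have : k₂ + m + d ≤ 2 ^ J := by omega
    exact_mod_cast this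
  have hHpos : ∀ s, 1 - h < s → H s = 0 := by
    intro s hs
    have : deriv (phiJk J φ k₂) s = 0 := by
      have heq : phiJk J φ k₂ =ᶠ[nhds s] (fun _ => (0:ℝ)) := by
        filter_upwards [isOpen_Ioi.mem_nhds hs] with t ht
        unfold phiJk
        rw [hφgt _ ?_, mul_zero]
        have h1 : (2:ℝ) ^ J * (1 - h) < (2:ℝ) ^ J * t :=
          (mul_lt_mul_iff_right₀ h2J).mpr ht
        rw [mul_sub, h2Jh, mul_one] at h1
        linarith
      rw [heq.deriv_eq, deriv_const]
    rw [hHdef]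
    simp only [this, mul_zero]
  have hm2J : (m : ℝ) ≤ (2:ℝ) ^ J := by
    have : m ≤ 2 ^ J := by omega
    exact_mod_cast this
  have h1h0 : (0:ℝ) ≤ 1 - h := by
    rw [hh, sub_nonneg, div_le_one h2J]
    exact hm2J
  -- conclude
  calc stiffEntry α J φ (k₁ + m) (k₂ + m)
      = ∫ x in (0:ℝ)..1, H (x - h) :=
        intervalIntegral.integral_congr (fun x _ => hint x)
    _ = ∫ x in (0:ℝ) - h..1 - h, H x :=
        intervalIntegral.integral_comp_sub_right H h
    _ = ∫ x in (0:ℝ)..1 - h, H x :=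
        integral_shift_left hHneg (by linarith) _
    _ = ∫ x in (0:ℝ)..1, H x :=
        (integral_shift_right hHpos h1h0 (by linarith)).symm
    _ = stiffEntry α J φ k₁ k₂ := rfl
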